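/- arXiv:1907.01228 — 3 statements merged into one kernel-verified Lean document; each statement's English description precedes it below -/
import Mathlib

section
/- Let P be a subset of the Euclidean plane ℝ² that is simply connected (as a topological subspace), let u, v ∈ ℝ² be points with the segment [u,v] contained in P, and let p ∈ P. Then the set {x ∈ [u,v] : the segment [p,x] is contained in P} of points of [u,v] visible from p is convex (in particular it is connected, i.e., it is a subsegment of [u,v]). -/
/-!
Let `x₁, x₂` be visible from `p` and `w` a point of the triangle `p x₁ x₂`. The boundary of the
triangle lies in `P` (the side `[x₁, x₂]` lies in `[u, v]`), so it suffices to show that a simply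
connected planar set containing the boundary of a triangle contains the whole triangle. If `w` is
a missing point strictly inside, identify the plane with `ℂ` and lift the boundary loop, shifted
by `-w`, through the covering `exp : ℂ → ℂ \ {0}`. Along each side the lift is an explicit
branch of `log`, whose imaginary part increases by the angle in `(0, π)` subtended at `w`;
so the lift is not closed. But the loop is null-homotopic in `P`, hence in `ℂ \ {w}`, and the
monodromy of a null-homotopic loop is trivial.
-/

open Set Module AffineMap unitInterval
open scoped Convex

section Segment

variable {E : Type*} [AddCommGroup E] [Module ℝ E]

theorem mem_segment_of_smul_sub_add_smul_sub_eq_zero {x y w : E} {α β : ℝ} (hα : 0 ≤ α)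
    (hβ : 0 ≤ β) (hαβ : 0 < α + β) (h : α • (x - w) + β • (y - w) = 0) : w ∈ [x -[ℝ] y] := by
  refine ⟨α / (α + β), β / (α + β), by positivity, by positivity, by field_simp, ?_⟩
  have hw : α • x + β • y = (α + β) • w := by
    linear_combination (norm := module) h
  rw [div_eq_inv_mul, div_eq_inv_mul, mul_smul, mul_smul, ← smul_add, hw, smul_smul,
    inv_mul_cancel₀ hαβ.ne', one_smul]

theorem exists_eq_smul_add_smul_add_smul_of_mem_convexHull {a b c w : E}
    (hw : w ∈ convexHull ℝ {a, b, c}) :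
    ∃ l₁ l₂ l₃ : ℝ, 0 ≤ l₁ ∧ 0 ≤ l₂ ∧ 0 ≤ l₃ ∧ l₁ + l₂ + l₃ = 1 ∧
      l₁ • a + l₂ • b + l₃ • c = w := by
  rw [convexHull_insert (insert_nonempty b {c}), convexHull_pair, convexJoin_singleton_left,
    mem_iUnion₂] at hw
  obtain ⟨z, ⟨γ, δ, hγ, hδ, hγδ, rfl⟩, α, β, hα, hβ, hαβ, rfl⟩ := hw
  refine ⟨α, β * γ, β * δ, hα, by positivity, by positivity, ?_, by module⟩
  linear_combination hαβ + β * hγδ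

variable [TopologicalSpace E] [ContinuousAdd E] [ContinuousSMul ℝ E]

def Path.segmentIn {s : Set E} {a b : E} (h : [a -[ℝ] b] ⊆ s) :
    Path (⟨a, h (left_mem_segment ℝ a b)⟩ : s) ⟨b, h (right_mem_segment ℝ a b)⟩ where
  toFun t := ⟨Path.segment a b t, h (Path.range_segment a b ▸ mem_range_self t)⟩
  continuous_toFun := (Path.segment a b).continuous.subtype_mk _
  source' := Subtype.ext (Path.segment a b).source
  target' := Subtype.ext (Path.segment a b).target

end Segment

namespace Complex

theorem lineMap_one_mem_slitPlane {z : ℂ} (hz : z ∈ slitPlane) {t : ℝ} (ht : t ∈ I) :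
    lineMap 1 z t ∈ slitPlane := by
  rw [lineMap_apply_module', add_comm]
  exact starConvex_one_slitPlane.add_smul_mem (by simpa using hz) ht.1 ht.2

theorem monodromy_exp_of_eq_lineMap {a b : {z : ℂ // z ≠ 0}} (γ : Path a b)
    (hγ : ∀ t, (γ t : ℂ) = lineMap (a : ℂ) (b : ℂ) (t : ℝ))
    (hba : (b : ℂ) / a ∈ slitPlane) (e) :
    (isCoveringMap_exp.monodromy (.mk γ) e : ℂ) = e + log ((b : ℂ) / a) := by
  obtain ⟨e, he⟩ := e
  have he : exp e = a := congrArg Subtype.val he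
  set z : ℂ := (b : ℂ) / a with hz
  let Γ : I → ℂ := fun t => e + log (lineMap 1 z (t : ℝ))
  have hΓ : Γ = isCoveringMap_exp.liftPath γ e (γ.source.trans (Subtype.ext he).symm) := by
    refine (isCoveringMap_exp.eq_liftPath_iff _).2 ⟨?_, ?_, by simp [Γ]⟩
    · exact continuous_const.add <| continuous_iff_continuousAt.2 fun t =>
        (by fun_prop : Continuous fun t : I => lineMap (1 : ℂ) z (t : ℝ)).continuousAt.clog
          (lineMap_one_mem_slitPlane hba t.2)
    · funext t
      apply Subtype.ext
      have ha : (a : ℂ) ≠ 0 := a.2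
      change exp (e + log _) = (γ t : ℂ)
      rw [exp_add, he, exp_log (slitPlane_ne_zero (lineMap_one_mem_slitPlane hba t.2)), hγ]
      simp only [lineMap_apply_module, real_smul, hz]
      field_simp
  exact (congrFun hΓ 1).symm.trans (by simp [Γ])

theorem arg_pos_of_im_pos {z : ℂ} (hz : 0 < z.im) : 0 < arg z :=
  (arg_nonneg_iff.2 hz.le).lt_of_ne fun h => hz.ne' (arg_eq_zero_iff.1 h.symm).2

theorem im_div_pos_of_cross_pos {z w : ℂ} (h : 0 < w.re * z.im - w.im * z.re) :
    0 < (z / w).im := by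
  have hw : w ≠ 0 := by rintro rfl; simp at h
  rw [div_im, ← sub_div]
  exact div_pos (by linarith) (normSq_pos.2 hw)

theorem mem_segment_of_cross_eq_zero {a b w : ℂ}
    (hcross : (a - w).re * (b - w).im = (a - w).im * (b - w).re)
    (hdot : (a - w).re * (b - w).re + (a - w).im * (b - w).im ≤ 0) : w ∈ [a -[ℝ] b] := by
  rcases eq_or_ne a w with rfl | ha
  · exact left_mem_segment ℝ _ _
  refine mem_segment_of_smul_sub_add_smul_sub_eq_zero (neg_nonneg.2 hdot) (normSq_nonneg _)
    (by linarith [normSq_pos.2 (sub_ne_zero.2 ha)]) ?_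
  apply Complex.ext <;> simp only [add_re, add_im, smul_re, smul_im, smul_eq_mul, normSq_apply,
    zero_re, zero_im]
  · linear_combination -(a - w).im * hcross
  · linear_combination (a - w).re * hcross

/-- Each side of the triangle `abc` subtends an angle in `(0, π)` at `w`, so the boundary
`a → b → c → a` winds once counterclockwise around `w`. -/
def TriangleWindsAround (w a b c : ℂ) : Prop :=
  0 < ((b - w) / (a - w)).im ∧ 0 < ((c - w) / (b - w)).im ∧ 0 < ((a - w) / (c - w)).im

theorem mem_segment_or_triangleWindsAround {a b c w : ℂ} {l₁ l₂ l₃ : ℝ} (h₁ : 0 ≤ l₁)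
    (h₂ : 0 ≤ l₂) (h₃ : 0 ≤ l₃) (hl : l₁ + l₂ + l₃ = 1) (hw : l₁ • a + l₂ • b + l₃ • c = w) :
    w ∈ [a -[ℝ] b] ∨ w ∈ [b -[ℝ] c] ∨ w ∈ [c -[ℝ] a] ∨
      TriangleWindsAround w a b c ∨ TriangleWindsAround w a c b := by
  have hrel : l₁ • (a - w) + l₂ • (b - w) + l₃ • (c - w) = 0 := by
    linear_combination (norm := module) hw - hl • w
  rcases h₃.eq_or_lt with rfl | h₃
  · exact .inl <| mem_segment_of_smul_sub_add_smul_sub_eq_zero h₁ h₂ (by linarith)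
      (by simpa using hrel)
  rcases h₁.eq_or_lt with rfl | h₁
  · exact .inr <| .inl <| mem_segment_of_smul_sub_add_smul_sub_eq_zero h₂ h₃.le (by linarith)
      (by simpa using hrel)
  rcases h₂.eq_or_lt with rfl | h₂
  · exact .inr <| .inr <| .inl <| mem_segment_of_smul_sub_add_smul_sub_eq_zero h₃.le h₁.le
      (by linarith) (by simpa [add_comm] using hrel)
  set A := a - w
  set B := b - w
  set C := c - w
  have hre : l₁ * A.re + l₂ * B.re + l₃ * C.re = 0 := by simpa using congrArg re hrel
  have him : l₁ * A.im + l₂ * B.im + l₃ * C.im = 0 := by simpa using congrArg im hrel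
  have hBC : l₃ * (B.re * C.im - B.im * C.re) = l₁ * (A.re * B.im - A.im * B.re) := by
    linear_combination B.re * him - B.im * hre
  have hCA : l₃ * (C.re * A.im - C.im * A.re) = l₂ * (A.re * B.im - A.im * B.re) := by
    linear_combination A.im * hre - A.re * him
  rcases lt_trichotomy 0 (A.re * B.im - A.im * B.re) with hpos | hzero | hneg
  · refine .inr <| .inr <| .inr <| .inl ⟨im_div_pos_of_cross_pos hpos, im_div_pos_of_cross_pos ?_,
      im_div_pos_of_cross_pos ?_⟩ <;> nlinarith
  · rcases le_or_gt (A.re * B.re + A.im * B.im) 0 with hdot | hdot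
    · exact .inl <| mem_segment_of_cross_eq_zero (by linarith) hdot
    · refine .inr <| .inr <| .inl <| mem_segment_of_cross_eq_zero ?_ ?_
      · nlinarith
      · have hCAdot : l₃ * (C.re * A.re + C.im * A.im) =
            -(l₁ * (A.re * A.re + A.im * A.im) + l₂ * (A.re * B.re + A.im * B.im)) := by
          linear_combination A.re * hre + A.im * him
        nlinarith [mul_self_nonneg A.re, mul_self_nonneg A.im]
  · refine .inr <| .inr <| .inr <| .inr ⟨im_div_pos_of_cross_pos ?_, im_div_pos_of_cross_pos ?_,
      im_div_pos_of_cross_pos ?_⟩ <;> nlinarith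

theorem mem_of_triangleWindsAround {P : Set ℂ} [SimplyConnectedSpace P] {a b c w : ℂ}
    (hab : [a -[ℝ] b] ⊆ P) (hbc : [b -[ℝ] c] ⊆ P) (hca : [c -[ℝ] a] ⊆ P)
    (hw : TriangleWindsAround w a b c) : w ∈ P := by
  by_contra hwP
  let φ : C(P, {z : ℂ // z ≠ 0}) :=
    ⟨fun z => ⟨z - w, sub_ne_zero.2 (ne_of_mem_of_not_mem z.2 hwP)⟩, by fun_prop⟩
  have hside {x y : ℂ} (h : [x -[ℝ] y] ⊆ P) (hxy : 0 < ((y - w) / (x - w)).im) (e) :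
      (isCoveringMap_exp.monodromy (.mk ((Path.segmentIn h).map φ.continuous)) e : ℂ) =
        e + log ((y - w) / (x - w)) :=
    monodromy_exp_of_eq_lineMap _
      (fun t => show lineMap x y (t : ℝ) - w = lineMap (x - w) (y - w) (t : ℝ) by
        simp only [lineMap_apply_module]; module)
      (mem_slitPlane_iff.2 (Or.inr hxy.ne')) e
  have hloop : Path.Homotopic.Quotient.mk ((((Path.segmentIn hab).trans (Path.segmentIn hbc)).trans
      (Path.segmentIn hca)).map φ.continuous) = .refl _ :=
    Path.Homotopic.Quotient.eq.2 ((SimplyConnectedSpace.paths_homotopic _ (.refl _)).map φ)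
  have ha : a - w ≠ 0 := sub_ne_zero.2 (ne_of_mem_of_not_mem (hab (left_mem_segment ℝ a b)) hwP)
  have key := congrArg
    (fun γ => (isCoveringMap_exp.monodromy γ ⟨log (a - w), Subtype.ext (exp_log ha)⟩ : ℂ)) hloop
  simp only [Path.map_trans, Path.Homotopic.Quotient.mk_trans, IsCoveringMap.monodromy_trans_apply,
    IsCoveringMap.monodromy_refl] at key
  rw [hside hca hw.2.2, hside hbc hw.2.1, hside hab hw.1] at key
  have hsum : (log ((b - w) / (a - w)) + log ((c - w) / (b - w)) +
      log ((a - w) / (c - w))).im = 0 := by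
    simpa [add_assoc] using congrArg im key
  simp only [add_im, log_im] at hsum
  linarith [arg_pos_of_im_pos hw.1, arg_pos_of_im_pos hw.2.1, arg_pos_of_im_pos hw.2.2]

theorem convexHull_subset_of_segment_subset {P : Set ℂ} [SimplyConnectedSpace P] {a b c : ℂ}
    (hab : [a -[ℝ] b] ⊆ P) (hbc : [b -[ℝ] c] ⊆ P) (hca : [c -[ℝ] a] ⊆ P) :
    convexHull ℝ {a, b, c} ⊆ P := by
  intro w hw
  obtain ⟨l₁, l₂, l₃, h₁, h₂, h₃, hl, hw⟩ := exists_eq_smul_add_smul_add_smul_of_mem_convexHull hw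
  rcases mem_segment_or_triangleWindsAround h₁ h₂ h₃ hl hw with h | h | h | h | h
  · exact hab h
  · exact hbc h
  · exact hca h
  · exact mem_of_triangleWindsAround hab hbc hca h
  · rw [segment_symm] at hab hbc hca
    exact mem_of_triangleWindsAround hca hbc hab h

end Complex

theorem convexHull_subset_of_segment_subset {E : Type*} [NormedAddCommGroup E] [NormedSpace ℝ E]
    [FiniteDimensional ℝ E] (hE : finrank ℝ E = 2) {P : Set E} [SimplyConnectedSpace P]
    {a b c : E} (hab : [a -[ℝ] b] ⊆ P) (hbc : [b -[ℝ] c] ⊆ P) (hca : [c -[ℝ] a] ⊆ P) :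
    convexHull ℝ {a, b, c} ⊆ P := by
  let e : E ≃L[ℝ] ℂ := .ofFinrankEq (hE.trans Complex.finrank_real_complex.symm)
  have : SimplyConnectedSpace (e '' P) :=
    (e.toHomeomorph.image P).symm.toHomotopyEquiv.simplyConnectedSpace
  have hseg {x y : E} (h : [x -[ℝ] y] ⊆ P) : [e x -[ℝ] e y] ⊆ e '' P := by
    have := image_segment ℝ (e : E →ₗ[ℝ] ℂ).toAffineMap x y
    simp only [LinearMap.coe_toAffineMap] at this
    exact this ▸ image_mono h
  intro w hw
  have hew : e w ∈ convexHull ℝ {e a, e b, e c} := by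
    have := LinearMap.image_convexHull (e : E →ₗ[ℝ] ℂ) {a, b, c}
    simp only [image_insert_eq, image_singleton] at this
    exact this ▸ mem_image_of_mem e hw
  exact e.injective.mem_set_image.1
    (Complex.convexHull_subset_of_segment_subset (hseg hab) (hseg hbc) (hseg hca) hew)

theorem visible_part_of_segment_convex_general
    (P : Set (EuclideanSpace ℝ (Fin 2)))
    (hP : SimplyConnectedSpace ↥P)
    (u v : EuclideanSpace ℝ (Fin 2))
    (huv : segment ℝ u v ⊆ P)
    (p : EuclideanSpace ℝ (Fin 2)) :
    Convex ℝ {x | x ∈ segment ℝ u v ∧ segment ℝ p x ⊆ P} := by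
  rintro x₁ ⟨hx₁, hpx₁⟩ x₂ ⟨hx₂, hpx₂⟩ α β hα hβ hαβ
  refine ⟨convex_segment u v hx₁ hx₂ hα hβ hαβ, ?_⟩
  have hx₁x₂ : [x₁ -[ℝ] x₂] ⊆ P := ((convex_segment u v).segment_subset hx₁ hx₂).trans huv
  have htriangle : convexHull ℝ {p, x₁, x₂} ⊆ P :=
    convexHull_subset_of_segment_subset finrank_euclideanSpace_fin hpx₁ hx₁x₂
      (segment_symm ℝ x₂ p ▸ hpx₂)
  refine ((convex_convexHull ℝ _).segment_subset ?_ ?_).trans htriangle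
  · exact subset_convexHull ℝ _ (by simp)
  · exact convex_convexHull ℝ _ (subset_convexHull ℝ _ (by simp))
      (subset_convexHull ℝ _ (by simp)) hα hβ hαβ

theorem visible_part_of_segment_convex
    (P : Set (EuclideanSpace ℝ (Fin 2)))
    (hP : SimplyConnectedSpace ↥P)
    (u v : EuclideanSpace ℝ (Fin 2))
    (huv : segment ℝ u v ⊆ P)
    (p : EuclideanSpace ℝ (Fin 2)) (hp : p ∈ P) :
    Convex ℝ {x | x ∈ segment ℝ u v ∧ segment ℝ p x ⊆ P} :=
  visible_part_of_segment_convex_general P hP u v huv p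
end

section
/- Let P ⊆ ℝ² be a closed set, let u = (u₁, 0) and v = (v₁, 0) be points on the x-axis, and suppose P is weakly visible from the segment [u,v], i.e., for every p ∈ P there is a point q ∈ [u,v] with [q,p] ⊆ P. Fix p ∈ P and let Vis(p) = {q ∈ P : [p,q] ⊆ P}. Let C be a connected component of P ∖ Vis(p) that is open in the subspace topology of P and satisfies C ∩ [u,v] = ∅, and let h > 0 be a real number such that every point w of (closure C) ∩ Vis(p) has second coordinate w₂ ≥ h. Then every point z ∈ C has second coordinate z₂ > h, i.e., C lies strictly above the horizontal line at height h. -/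
theorem pocket_strictly_above
    (P : Set (EuclideanSpace ℝ (Fin 2)))
    (hP_closed : IsClosed P)
    (u v : EuclideanSpace ℝ (Fin 2))
    (hu : u 1 = 0) (hv : v 1 = 0)
    (hwv : ∀ p ∈ P, ∃ q ∈ segment ℝ u v, segment ℝ q p ⊆ P)
    (p : EuclideanSpace ℝ (Fin 2)) (hp : p ∈ P)
    (C : Set (EuclideanSpace ℝ (Fin 2)))
    (hC_comp : ∃ x ∈ P \ {q | q ∈ P ∧ segment ℝ p q ⊆ P},
      C = connectedComponentIn (P \ {q | q ∈ P ∧ segment ℝ p q ⊆ P}) x)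
    (hC_open : IsOpen ((Subtype.val ⁻¹' C : Set P)))
    (hC_uv : C ∩ segment ℝ u v = ∅)
    (h : ℝ) (hh : 0 < h)
    (hclos : ∀ w ∈ closure C ∩ {q | q ∈ P ∧ segment ℝ p q ⊆ P}, h ≤ w 1) :
    ∀ z ∈ C, h < z 1 := by
  intro z hz
  obtain ⟨x, hxS, hCx⟩ := hC_comp
  set Vis := {q | q ∈ P ∧ segment ℝ p q ⊆ P} with hVisDef
  set S := P \ Vis with hSDef
  have hCsub : C ⊆ S := hCx ▸ connectedComponentIn_subset S x
  have hzP : z ∈ P := (hCsub hz).1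
  obtain ⟨q, hq_uv, hqz⟩ := hwv z hzP
  have hq1 : q 1 = 0 := by
    obtain ⟨a, b, ha, hb, hab, rfl⟩ := hq_uv
    simp [PiLp.add_apply, PiLp.smul_apply, hu, hv]
  have hqC : q ∉ C := fun hqC =>
    Set.eq_empty_iff_forall_notMem.mp hC_uv q ⟨hqC, hq_uv⟩
  set γ : ℝ → EuclideanSpace ℝ (Fin 2) := fun t => (1 - t) • q + t • z with hγ
  have hγcont : Continuous γ := by fun_prop
  have hγseg : ∀ t ∈ Set.Icc (0:ℝ) 1, γ t ∈ P := by
    intro t ht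
    apply hqz
    rw [segment_eq_image ℝ q z]
    exact ⟨t, ht, rfl⟩
  obtain ⟨U, hUopen, hU⟩ := isOpen_induced_iff.mp hC_open
  have hmem : ∀ y (hy : y ∈ P), (y ∈ C ↔ y ∈ U) := by
    intro y hy
    have := Set.ext_iff.mp hU ⟨y, hy⟩
    simpa using this.symm
  set A := Set.Icc (0:ℝ) 1 \ γ ⁻¹' U with hA
  have hAclosed : IsClosed A := isClosed_Icc.sdiff (hUopen.preimage hγcont)
  have hγ0 : γ 0 = q := by simp [hγ]
  have hγ1 : γ 1 = z := by simp [hγ]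
  have h0A : (0:ℝ) ∈ A := by
    refine ⟨⟨le_refl 0, zero_le_one⟩, fun h' => ?_⟩
    have h'' : γ 0 ∈ U := h'
    rw [hγ0] at h''
    have : q ∈ U := h''
    exact hqC ((hmem q (hqz (left_mem_segment ℝ q z))).mpr this)
  have hbdd : BddAbove A := ⟨1, fun t ht => ht.1.2⟩
  set t₀ := sSup A with ht₀def
  have ht₀A : t₀ ∈ A := hAclosed.csSup_mem ⟨0, h0A⟩ hbdd
  have ht₀Icc := ht₀A.1
  have h1nA : (1:ℝ) ∉ A := by
    intro h'
    have : z ∈ U := (hmem z hzP).mp hz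
    exact h'.2 (by rwa [Set.mem_preimage, hγ1])
  have ht₀lt1 : t₀ < 1 := lt_of_le_of_ne ht₀Icc.2 (fun he => h1nA (he ▸ ht₀A))
  have hIocC : ∀ t ∈ Set.Ioc t₀ 1, γ t ∈ C := by
    intro t ht
    have htIcc : t ∈ Set.Icc (0:ℝ) 1 := ⟨le_trans ht₀Icc.1 ht.1.le, ht.2⟩
    have hnA : t ∉ A := fun h' => absurd (le_csSup hbdd h') (not_le.mpr ht.1)
    have hUt : t ∈ γ ⁻¹' U := by
      by_contra h'
      exact hnA ⟨htIcc, h'⟩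
    exact (hmem _ (hγseg t htIcc)).mpr hUt
  set w := γ t₀ with hwdef
  have hwP : w ∈ P := hγseg t₀ ht₀Icc
  have hwC : w ∉ C := fun h' => ht₀A.2 ((hmem w hwP).mp h')
  have hwcl : w ∈ closure C := by
    have h1 : t₀ ∈ closure (Set.Ioc t₀ 1) := by
      rw [closure_Ioc (ne_of_lt ht₀lt1)]
      exact ⟨le_refl _, ht₀lt1.le⟩
    have h2 : γ t₀ ∈ closure (γ '' Set.Ioc t₀ 1) :=
      mem_closure_image hγcont.continuousAt h1
    exact closure_mono (Set.image_subset_iff.mpr fun t ht => hIocC t ht) h2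
  have hwVis : w ∈ Vis := by
    by_contra h'
    have hwS : w ∈ S := ⟨hwP, h'⟩
    have hC_conn : IsPreconnected C := by
      rw [hCx]
      exact (isConnected_connectedComponentIn_iff.mpr hxS).isPreconnected
    have hconn : IsPreconnected (C ∪ {w}) := by
      refine hC_conn.subset_closure Set.subset_union_left ?_
      intro y hy
      rcases hy with hy | hy
      · exact subset_closure hy
      · rw [Set.mem_singleton_iff] at hy
        exact hy ▸ hwcl
    have hsubS : C ∪ {w} ⊆ S :=
      Set.union_subset hCsub (by simpa using hwS)
    have hxmem : x ∈ C ∪ {w} := Or.inl (hCx ▸ mem_connectedComponentIn hxS)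
    have := hconn.subset_connectedComponentIn hxmem hsubS
    exact hwC (hCx ▸ this (Or.inr rfl))
  have hw1 : h ≤ w 1 := hclos w ⟨hwcl, hwVis⟩
  have hw1' : w 1 = t₀ * z 1 := by
    simp [hwdef, hγ, PiLp.add_apply, PiLp.smul_apply, hq1]
  rw [hw1'] at hw1
  have hz1 : 0 < z 1 := by nlinarith [ht₀Icc.1, ht₀Icc.2]
  nlinarith [mul_pos (sub_pos.mpr ht₀lt1) hz1]
end

section
/- Let P ⊆ ℝ² be a simple polygon region with vertices v₁, …, vₙ, and let S ⊆ P be a nonempty compact convex set. Then there exists an index i such that the vertex vᵢ sees every point of S in P, i.e., for every s ∈ S the segment [vᵢ, s] is contained in P. -/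
open Metric Set Function Module

local notation "E2" => EuclideanSpace ℝ (Fin 2)

open scoped RealInnerProductSpace


lemma aux_exists_normal (u : E2) (hu : u ≠ 0) : ∃ m : E2, m ≠ 0 ∧ ⟪u, m⟫ = 0 := by
  have h2 : finrank ℝ E2 = 2 := finrank_euclideanSpace_fin
  have hbot : ((ℝ ∙ u)ᗮ : Submodule ℝ E2) ≠ ⊥ := by
    intro h
    have h1 : finrank ℝ (ℝ ∙ u : Submodule ℝ E2) = 1 := finrank_span_singleton hu
    have := Submodule.finrank_add_finrank_orthogonal (K := (ℝ ∙ u : Submodule ℝ E2))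
    rw [h, h1, finrank_bot, h2] at this
    omega
  obtain ⟨w, hw, hw0⟩ := Submodule.exists_mem_ne_zero_of_ne_bot hbot
  refine ⟨w, hw0, ?_⟩
  have := (Submodule.mem_orthogonal _ _).mp hw u (Submodule.mem_span_singleton_self u)
  exact this

lemma aux_collinear (u m y : E2) (hu : u ≠ 0) (hm : m ≠ 0) (hum : ⟪u, m⟫ = 0)
    (hy : ⟪y, m⟫ = 0) : ∃ t : ℝ, y = t • u := by
  have h2 : finrank ℝ E2 = 2 := finrank_euclideanSpace_fin
  have hKfin : finrank ℝ ((ℝ ∙ m)ᗮ : Submodule ℝ E2) = 1 := by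
    have := Submodule.finrank_add_finrank_orthogonal (K := (ℝ ∙ m : Submodule ℝ E2))
    rw [finrank_span_singleton hm, h2] at this
    omega
  have hmemK : ∀ x : E2, ⟪x, m⟫ = 0 → x ∈ ((ℝ ∙ m)ᗮ : Submodule ℝ E2) := by
    intro x hx
    rw [Submodule.mem_orthogonal]
    intro a ha
    obtain ⟨c, rfl⟩ := Submodule.mem_span_singleton.mp ha
    rw [inner_smul_left, real_inner_comm, hx]
    simp
  have hle : (ℝ ∙ u : Submodule ℝ E2) ≤ (ℝ ∙ m)ᗮ := by
    rw [Submodule.span_le, Set.singleton_subset_iff]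
    exact hmemK u hum
  have hspan : (ℝ ∙ u : Submodule ℝ E2) = (ℝ ∙ m)ᗮ := by
    apply Submodule.eq_of_le_of_finrank_eq hle
    rw [finrank_span_singleton hu, hKfin]
  have : y ∈ (ℝ ∙ u : Submodule ℝ E2) := by rw [hspan]; exact hmemK y hy
  obtain ⟨t, ht⟩ := Submodule.mem_span_singleton.mp this
  exact ⟨t, ht.symm⟩

lemma aux_infDist_combo {S : Set E2} (hconv : Convex ℝ S) (hne : S.Nonempty)
    {x y : E2} {a b : ℝ} (ha : 0 ≤ a) (hb : 0 ≤ b) (hab : a + b = 1) :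
    infDist (a • x + b • y) S ≤ a * infDist x S + b * infDist y S := by
  refine le_of_forall_pos_le_add fun ε hε => ?_
  obtain ⟨p, hp, hpd⟩ := (infDist_lt_iff hne).mp
    (show infDist x S < infDist x S + ε/2 by linarith)
  obtain ⟨q, hq, hqd⟩ := (infDist_lt_iff hne).mp
    (show infDist y S < infDist y S + ε/2 by linarith)
  have hmem : a • p + b • q ∈ S := hconv hp hq ha hb hab
  have hd : dist (a • x + b • y) (a • p + b • q) ≤ a * dist x p + b * dist y q := by
    rw [dist_eq_norm, dist_eq_norm, dist_eq_norm]
    have hrw : (a • x + b • y) - (a • p + b • q) = a • (x - p) + b • (y - q) := by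
      rw [smul_sub, smul_sub]; abel
    rw [hrw]
    calc ‖a • (x - p) + b • (y - q)‖ ≤ ‖a • (x - p)‖ + ‖b • (y - q)‖ := norm_add_le _ _
      _ = a * ‖x - p‖ + b * ‖y - q‖ := by
          rw [norm_smul, norm_smul, Real.norm_eq_abs, Real.norm_eq_abs,
            abs_of_nonneg ha, abs_of_nonneg hb]
  have h1 : infDist (a • x + b • y) S ≤ dist (a • x + b • y) (a • p + b • q) :=
    infDist_le_dist_of_mem hmem
  nlinarith [mul_le_mul_of_nonneg_left hpd.le ha, mul_le_mul_of_nonneg_left hqd.le hb]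

lemma aux_step_out {S : Set E2} (hcl : IsClosed S) {s₀ p : E2} (hs₀ : s₀ ∈ S) (hp : p ∉ S)
    {ε : ℝ} (hε : 0 < ε) : ∃ q ∈ segment ℝ s₀ p, q ∉ S ∧ infDist q S ≤ ε := by
  have hps : p ≠ s₀ := fun h => hp (h ▸ hs₀)
  have hnorm : (0:ℝ) < ‖p - s₀‖ := by
    rw [norm_pos_iff, sub_ne_zero]; exact hps
  set σ : ℝ → E2 := fun t => s₀ + t • (p - s₀) with hσ
  have hσcont : Continuous σ := by fun_prop
  set A : Set ℝ := Icc (0:ℝ) 1 ∩ σ ⁻¹' S with hA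
  have hAcpt : IsCompact A := isCompact_Icc.inter_right (hcl.preimage hσcont)
  have hA0 : (0:ℝ) ∈ A := by
    constructor
    · exact ⟨le_refl 0, zero_le_one⟩
    · show σ 0 ∈ S
      simp [hσ, hs₀]
  have hAne : A.Nonempty := ⟨0, hA0⟩
  set t₀ : ℝ := sSup A with ht₀
  have ht₀A : t₀ ∈ A := hAcpt.sSup_mem hAne
  have ht₀1 : t₀ < 1 := by
    rcases lt_or_eq_of_le ht₀A.1.2 with h | h
    · exact h
    · exfalso
      have : σ 1 ∈ S := by rw [← h]; exact ht₀A.2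
      apply hp
      simpa [hσ] using this
  set η : ℝ := min (1 - t₀) (ε / ‖p - s₀‖) with hη
  have hηpos : 0 < η := lt_min (by linarith) (div_pos hε hnorm)
  refine ⟨σ (t₀ + η), ?_, ?_, ?_⟩
  · rw [segment_eq_image']
    exact ⟨t₀ + η, ⟨by have := ht₀A.1.1; linarith, by have := min_le_left (1 - t₀) (ε / ‖p - s₀‖); linarith⟩, rfl⟩
  · intro hmem
    have : t₀ + η ∈ A := by
      refine ⟨⟨by have := ht₀A.1.1; linarith, by have := min_le_left (1 - t₀) (ε / ‖p - s₀‖); linarith⟩, hmem⟩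
    have := le_csSup hAcpt.bddAbove this
    linarith
  · have hdist : dist (σ (t₀ + η)) (σ t₀) = η * ‖p - s₀‖ := by
      rw [dist_eq_norm]
      have : σ (t₀ + η) - σ t₀ = η • (p - s₀) := by
        simp only [hσ]
        rw [add_smul]
        abel
      rw [this, norm_smul, Real.norm_eq_abs, abs_of_pos hηpos]
    have h1 : infDist (σ (t₀ + η)) S ≤ dist (σ (t₀ + η)) (σ t₀) := infDist_le_dist_of_mem ht₀A.2
    rw [hdist] at h1
    have h2 : η * ‖p - s₀‖ ≤ (ε / ‖p - s₀‖) * ‖p - s₀‖ :=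
      mul_le_mul_of_nonneg_right (min_le_right _ _) hnorm.le
    rw [div_mul_cancel₀ _ (ne_of_gt hnorm)] at h2
    linarith




/-- `P` is a simple polygon region with the `n` vertices `v 0, …, v (n-1)`:
a compact subset of the plane with nonempty interior, equal to the closure of its
interior, whose frontier is the union of the `n` edges `[v i, v (i+1)]` (indices
mod `n`), such that consecutive edges meet exactly in their common vertex and
non-consecutive edges are disjoint. -/
def IsSimplePolygonRegion {n : ℕ} [NeZero n]
    (P : Set (EuclideanSpace ℝ (Fin 2))) (v : Fin n → EuclideanSpace ℝ (Fin 2)) : Prop :=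
  3 ≤ n ∧ Function.Injective v ∧ IsCompact P ∧ (interior P).Nonempty ∧
  P = closure (interior P) ∧
  frontier P = ⋃ i : Fin n, segment ℝ (v i) (v (i + 1)) ∧
  (∀ i : Fin n, segment ℝ (v i) (v (i + 1)) ∩ segment ℝ (v (i + 1)) (v (i + 1 + 1))
      = {v (i + 1)}) ∧
  (∀ i j : Fin n, i ≠ j → j ≠ i + 1 → i ≠ j + 1 →
    Disjoint (segment ℝ (v i) (v (i + 1))) (segment ℝ (v j) (v (j + 1))))


section Poly

variable {n : ℕ} [NeZero n] {P : Set (EuclideanSpace ℝ (Fin 2))}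
  {v : Fin n → EuclideanSpace ℝ (Fin 2)}


variable {n : ℕ} [NeZero n] {P : Set (EuclideanSpace ℝ (Fin 2))}
  {v : Fin n → EuclideanSpace ℝ (Fin 2)}

lemma poly_one_ne_zero (h3 : 3 ≤ n) : (1 : Fin n) ≠ 0 := by
  have h2 : ((1 : Fin n) : ℕ) = 1 % n := Fin.val_one' n
  have h4 : 1 % n = 1 := Nat.mod_eq_of_lt (by omega)
  intro h
  rw [h] at h2
  simp [h4] at h2

lemma poly_edge_ne (hP : IsSimplePolygonRegion P v) (i : Fin n) : v i ≠ v (i + 1) := by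
  intro h
  have := hP.2.1 h
  have h1 : (1 : Fin n) = 0 := by
    have := left_eq_add.mp this
    exact this
  exact poly_one_ne_zero hP.1 h1

lemma poly_dir_ne (hP : IsSimplePolygonRegion P v) (i : Fin n) : v (i + 1) - v i ≠ 0 := by
  rw [sub_ne_zero]
  exact (poly_edge_ne hP i).symm

lemma poly_closed (hP : IsSimplePolygonRegion P v) : IsClosed P := hP.2.2.1.isClosed

lemma poly_frontier_subset (hP : IsSimplePolygonRegion P v) : frontier P ⊆ P := by
  have := frontier_subset_closure (s := P)
  rwa [(poly_closed hP).closure_eq] at this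

lemma poly_edge_subset (hP : IsSimplePolygonRegion P v) (i : Fin n) :
    segment ℝ (v i) (v (i + 1)) ⊆ P := by
  intro x hx
  apply poly_frontier_subset hP
  rw [hP.2.2.2.2.2.1]
  exact mem_iUnion.mpr ⟨i, hx⟩

lemma poly_inter_edges (hP : IsSimplePolygonRegion P v) {i j : Fin n} (hij : i ≠ j) {x : E2}
    (hxi : x ∈ segment ℝ (v i) (v (i + 1))) (hxj : x ∈ segment ℝ (v j) (v (j + 1))) :
    ∃ k, x = v k := by
  rcases eq_or_ne j (i + 1) with rfl | hj
  · have := hP.2.2.2.2.2.2.1 i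
    have hx : x ∈ segment ℝ (v i) (v (i+1)) ∩ segment ℝ (v (i+1)) (v (i+1+1)) := ⟨hxi, hxj⟩
    rw [this] at hx
    exact ⟨i + 1, hx⟩
  · rcases eq_or_ne i (j + 1) with rfl | hi
    · have := hP.2.2.2.2.2.2.1 j
      have hx : x ∈ segment ℝ (v j) (v (j+1)) ∩ segment ℝ (v (j+1)) (v (j+1+1)) := ⟨hxj, hxi⟩
      rw [this] at hx
      exact ⟨j + 1, hx⟩
    · exact absurd hxj ((hP.2.2.2.2.2.2.2 i j hij hj hi).le_bot ⟨hxi, ·⟩ : _)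

lemma poly_openSegment_not_vertex (hP : IsSimplePolygonRegion P v) {i : Fin n} {z : E2}
    (hz : z ∈ openSegment ℝ (v i) (v (i + 1))) (k : Fin n) : z ≠ v k := by
  intro hzk
  have hzi : z ≠ v i := by
    intro h
    rw [h] at hz
    exact poly_edge_ne hP i (left_mem_openSegment_iff.mp hz)
  have hzi1 : z ≠ v (i + 1) := by
    intro h
    rw [h] at hz
    exact poly_edge_ne hP i (right_mem_openSegment_iff.mp hz)
  have hki : k ≠ i := fun h => hzi (by rw [hzk, h])
  have hki1 : k ≠ i + 1 := fun h => hzi1 (by rw [hzk, h])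
  have hzsegi : z ∈ segment ℝ (v i) (v (i + 1)) := openSegment_subset_segment _ _ _ hz
  have hzsegk : z ∈ segment ℝ (v k) (v (k + 1)) := by
    rw [hzk]; exact left_mem_segment _ _ _
  rcases eq_or_ne i (k + 1) with rfl | hik
  · have := hP.2.2.2.2.2.2.1 k
    have hx : z ∈ segment ℝ (v k) (v (k+1)) ∩ segment ℝ (v (k+1)) (v (k+1+1)) := ⟨hzsegk, hzsegi⟩
    rw [this] at hx
    exact hzi hx
  · exact (hP.2.2.2.2.2.2.2 i k (Ne.symm hki) hki1 hik).le_bot ⟨hzsegi, hzsegk⟩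

lemma poly_mem_openSegment_of_ne {x y z : E2} (hz : z ∈ segment ℝ x y) (h1 : z ≠ x)
    (h2 : z ≠ y) : z ∈ openSegment ℝ x y := by
  rw [segment_eq_image'] at hz
  obtain ⟨θ, ⟨hθ0, hθ1⟩, rfl⟩ := hz
  have hθ0' : θ ≠ 0 := by
    intro h
    apply h1
    simp [h]
  have hθ1' : θ ≠ 1 := by
    intro h
    apply h2
    simp [h]
  rw [openSegment_eq_image']
  exact ⟨θ, ⟨lt_of_le_of_ne hθ0 (Ne.symm hθ0'), lt_of_le_of_ne hθ1 hθ1'⟩, rfl⟩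

lemma poly_inner_const_on_edge {i : Fin n} {m : E2} (hwm : ⟪v (i + 1) - v i, m⟫ = 0) {z : E2}
    (hz : z ∈ segment ℝ (v i) (v (i + 1))) : ⟪z, m⟫ = ⟪v i, m⟫ := by
  rw [segment_eq_image'] at hz
  obtain ⟨θ, _, rfl⟩ := hz
  rw [inner_add_left, real_inner_smul_left, hwm]
  ring



lemma aux_isClosed_segment (x y : E2) : IsClosed (segment ℝ x y) := by
  rw [segment_eq_image']
  apply IsCompact.isClosed
  apply isCompact_Icc.image
  exact continuous_const.add (continuous_id.smul continuous_const)

lemma aux_inner_linear (m : E2) : IsLinearMap ℝ (fun x : E2 => ⟪x, m⟫) :=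
  ⟨fun x y => inner_add_left x y m, fun c x => real_inner_smul_left x m c⟩

lemma poly_local_halfplane (hP : IsSimplePolygonRegion P v) (i : Fin n) {m : E2} (hm : m ≠ 0)
    (hwm : ⟪v (i + 1) - v i, m⟫ = 0) {z : E2} (hz : z ∈ openSegment ℝ (v i) (v (i + 1))) :
    ∃ δ > 0, (∀ x ∈ ball z δ, (x ∈ P ↔ ⟪v i, m⟫ ≤ ⟪x, m⟫)) ∨
      (∀ x ∈ ball z δ, (x ∈ P ↔ ⟪x, m⟫ ≤ ⟪v i, m⟫)) := by
  have hw : v (i + 1) - v i ≠ 0 := poly_dir_ne hP i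
  have hwnorm : (0:ℝ) < ‖v (i + 1) - v i‖ := norm_pos_iff.mpr hw
  have hmnorm : (0:ℝ) < ‖m‖ := norm_pos_iff.mpr hm
  have hz' := hz
  rw [openSegment_eq_image'] at hz'
  obtain ⟨θ, hθ, hzeq⟩ := hz' 
  -- other edges stay away from z
  set F' : Set E2 := ⋃ j ∈ ({i}ᶜ : Set (Fin n)), segment ℝ (v j) (v (j + 1)) with hF'
  have hF'closed : IsClosed F' :=
    (Set.toFinite _).isClosed_biUnion (fun j _ => aux_isClosed_segment _ _)
  have hzF' : z ∉ F' := by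
    intro hmem
    rw [hF', mem_iUnion₂] at hmem
    obtain ⟨j, hj, hzj⟩ := hmem
    have hij : i ≠ j := fun h => hj (by simp [h])
    obtain ⟨k, hk⟩ := poly_inter_edges hP hij (openSegment_subset_segment _ _ _ hz) hzj
    exact poly_openSegment_not_vertex hP hz k hk
  obtain ⟨δ₀, hδ₀, hball₀⟩ := Metric.mem_nhds_iff.mp (hF'closed.isOpen_compl.mem_nhds hzF')
  set w := v (i + 1) - v i with hwdef
  set δ₁ : ℝ := min (θ * ‖w‖) ((1 - θ) * ‖w‖) with hδ₁def
  have hδ₁ : 0 < δ₁ := lt_min (mul_pos hθ.1 hwnorm) (mul_pos (by linarith [hθ.2]) hwnorm)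
  set δ : ℝ := min δ₀ δ₁ with hδdef
  have hδ : 0 < δ := lt_min hδ₀ hδ₁
  have hzm : ⟪z, m⟫ = ⟪v i, m⟫ :=
    poly_inner_const_on_edge hwm (openSegment_subset_segment _ _ _ hz)
  -- key1 : frontier points in the ball lie on the edge line
  have key1 : ∀ x ∈ ball z δ, x ∈ frontier P → ⟪x, m⟫ = ⟪v i, m⟫ := by
    intro x hx hxf
    rw [hP.2.2.2.2.2.1, mem_iUnion] at hxf
    obtain ⟨j, hxj⟩ := hxf
    rcases eq_or_ne j i with rfl | hj
    · exact poly_inner_const_on_edge hwm hxj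
    · exfalso
      have hxF' : x ∈ F' := by
        rw [hF', mem_iUnion₂]
        exact ⟨j, by simp [hj], hxj⟩
      exact hball₀ (ball_subset_ball (min_le_left _ _) hx) hxF'
  -- key2 : points on the line in the ball are in P
  have key2 : ∀ x ∈ ball z δ, ⟪x, m⟫ = ⟪v i, m⟫ → x ∈ P := by
    intro x hx hxm
    have hxz : ⟪x - z, m⟫ = 0 := by rw [inner_sub_left, hxm, hzm]; ring
    obtain ⟨t, ht⟩ := aux_collinear w m (x - z) hw hm hwm hxz
    have hxeq : x = v i + (θ + t) • w := by
      have : x = z + (x - z) := by abel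
      rw [this, ht, ← hzeq]
      dsimp only
      rw [add_smul]
      abel
    have hdist : dist x z = |t| * ‖w‖ := by
      rw [dist_eq_norm]
      have hxz' : x - z = t • w := ht
      rw [hxz', norm_smul, Real.norm_eq_abs]
    have hxball : dist x z < δ₁ := lt_of_lt_of_le (mem_ball.mp hx) (min_le_right _ _)
    have ht1 : |t| < θ := by
      have : |t| * ‖w‖ < θ * ‖w‖ := by
        rw [← hdist]
        exact lt_of_lt_of_le hxball (min_le_left _ _)
      exact lt_of_mul_lt_mul_right this (norm_nonneg w)
    have ht2 : |t| < 1 - θ := by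
      have : |t| * ‖w‖ < (1 - θ) * ‖w‖ := by
        rw [← hdist]
        exact lt_of_lt_of_le hxball (min_le_right _ _)
      exact lt_of_mul_lt_mul_right this (norm_nonneg w)
    have h0 : 0 < θ + t := by
      have := abs_lt.mp ht1
      linarith [this.1]
    have h1 : θ + t < 1 := by
      have := abs_lt.mp ht2
      linarith [this.2]
    apply poly_edge_subset hP i
    rw [segment_eq_image']
    exact ⟨θ + t, ⟨h0.le, h1.le⟩, hxeq.symm⟩
  -- the two open half-ball pieces
  set U : Set E2 := ball z δ ∩ {x | ⟪v i, m⟫ < ⟪x, m⟫} with hUdef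
  set V : Set E2 := ball z δ ∩ {x | ⟪x, m⟫ < ⟪v i, m⟫} with hVdef
  have hUconv : Convex ℝ U := (convex_ball z δ).inter (convex_halfSpace_gt (aux_inner_linear m) _)
  have hVconv : Convex ℝ V := (convex_ball z δ).inter (convex_halfSpace_lt (aux_inner_linear m) _)
  have hdisjICmpl : Disjoint (interior P) Pᶜ :=
    Set.disjoint_left.mpr fun x hx hxc => hxc (interior_subset hx)
  have hNoFr : ∀ x, x ∈ ball z δ → x ∉ {x | ⟪x, m⟫ = ⟪v i, m⟫} → x ∈ interior P ∪ Pᶜ := by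
    intro x hx hxne
    have hxf : x ∉ frontier P := fun hf => hxne (key1 x hx hf)
    by_cases hxP : x ∈ P
    · left
      by_contra hxi
      exact hxf (by rw [(poly_closed hP).frontier_eq]; exact ⟨hxP, hxi⟩)
    · right; exact hxP
  have hUcov : U ⊆ interior P ∪ Pᶜ := by
    rintro x ⟨hx1, hx2⟩
    exact hNoFr x hx1 (fun h => absurd (Set.mem_setOf_eq ▸ h) (ne_of_gt hx2))
  have hVcov : V ⊆ interior P ∪ Pᶜ := by
    rintro x ⟨hx1, hx2⟩
    exact hNoFr x hx1 (fun h => absurd (Set.mem_setOf_eq ▸ h) (ne_of_lt hx2))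
  have hU2 : U ⊆ interior P ∨ U ⊆ Pᶜ :=
    IsPreconnected.subset_or_subset isOpen_interior (poly_closed hP).isOpen_compl
      hdisjICmpl hUcov hUconv.isPreconnected
  have hV2 : V ⊆ interior P ∨ V ⊆ Pᶜ :=
    IsPreconnected.subset_or_subset isOpen_interior (poly_closed hP).isOpen_compl
      hdisjICmpl hVcov hVconv.isPreconnected
  have hz_frontier : z ∈ frontier P := by
    rw [hP.2.2.2.2.2.1]
    exact mem_iUnion.mpr ⟨i, openSegment_subset_segment _ _ _ hz⟩
  -- not both interior
  have hnotPP : ¬(U ⊆ interior P ∧ V ⊆ interior P) := by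
    rintro ⟨h1, h2⟩
    have hball : ball z δ ⊆ P := by
      intro x hx
      rcases lt_trichotomy ⟪x, m⟫ ⟪v i, m⟫ with h | h | h
      · exact interior_subset (h2 ⟨hx, h⟩)
      · exact key2 x hx h
      · exact interior_subset (h1 ⟨hx, h⟩)
    have hzi : z ∈ interior P :=
      mem_interior.mpr ⟨ball z δ, hball, isOpen_ball, mem_ball_self hδ⟩
    have := hz_frontier
    rw [(poly_closed hP).frontier_eq] at this
    exact this.2 hzi
  -- not both exterior
  have hnotCC : ¬(U ⊆ Pᶜ ∧ V ⊆ Pᶜ) := by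
    rintro ⟨h1, h2⟩
    have hzP : z ∈ closure (interior P) := by
      rw [← hP.2.2.2.2.1]
      exact poly_frontier_subset hP hz_frontier
    obtain ⟨y, hy_ball, hy_int⟩ :=
      mem_closure_iff.mp hzP (ball z (δ/2)) isOpen_ball (mem_ball_self (by linarith))
    obtain ⟨r, hr, hrball⟩ := Metric.isOpen_iff.mp isOpen_interior y hy_int
    set c : ℝ := min (r / (2 * ‖m‖)) (δ / (4 * ‖m‖)) with hcdef
    have hc : 0 < c := lt_min (div_pos hr (by linarith)) (div_pos hδ (by linarith))
    have hcm1 : c * ‖m‖ < r := by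
      have : c ≤ r / (2 * ‖m‖) := min_le_left _ _
      have h2' : c * ‖m‖ ≤ (r / (2 * ‖m‖)) * ‖m‖ := mul_le_mul_of_nonneg_right this hmnorm.le
      have h3' : (r / (2 * ‖m‖)) * ‖m‖ = r / 2 := by field_simp
      rw [h3'] at h2'
      linarith
    have hcm2 : c * ‖m‖ ≤ δ / 4 := by
      have : c ≤ δ / (4 * ‖m‖) := min_le_right _ _
      have h2' : c * ‖m‖ ≤ (δ / (4 * ‖m‖)) * ‖m‖ := mul_le_mul_of_nonneg_right this hmnorm.le
      have h3' : (δ / (4 * ‖m‖)) * ‖m‖ = δ / 4 := by field_simp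
      linarith [h3' ▸ h2']
    have hkey : ∀ s : ℝ, |s| = 1 → y + (s * c) • m ∈ P ∧ y + (s * c) • m ∈ ball z δ := by
      intro s hs
      have hnorm' : ‖(s * c) • m‖ = c * ‖m‖ := by
        rw [norm_smul, Real.norm_eq_abs, abs_mul, hs, one_mul, abs_of_pos hc]
      constructor
      · apply interior_subset
        apply hrball
        rw [mem_ball, dist_eq_norm]
        have : y + (s * c) • m - y = (s * c) • m := by abel
        rw [this, hnorm']
        exact hcm1
      · rw [mem_ball]
        calc dist (y + (s * c) • m) z ≤ dist (y + (s * c) • m) y + dist y z :=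
              dist_triangle _ _ _
          _ < (c * ‖m‖) + δ/2 := by
              apply add_lt_add_of_le_of_lt
              · rw [dist_eq_norm]
                have : y + (s * c) • m - y = (s * c) • m := by abel
                rw [this, hnorm']
              · exact hy_ball
          _ ≤ δ/4 + δ/2 := by linarith
          _ < δ := by linarith
    have hinner : ∀ s : ℝ, ⟪y + (s * c) • m, m⟫ = ⟪y, m⟫ + s * c * ‖m‖^2 := by
      intro s
      rw [inner_add_left, real_inner_smul_left, real_inner_self_eq_norm_sq]
    rcases le_or_gt ⟪v i, m⟫ ⟪y, m⟫ with h | h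
    · obtain ⟨hyP, hyball⟩ := hkey 1 (by norm_num)
      have : y + (1 * c) • m ∈ U := by
        refine ⟨hyball, ?_⟩
        rw [Set.mem_setOf_eq, hinner]
        have : 0 < 1 * c * ‖m‖^2 := by positivity
        linarith
      exact h1 this hyP
    · obtain ⟨hyP, hyball⟩ := hkey (-1) (by norm_num)
      have : y + ((-1) * c) • m ∈ V := by
        refine ⟨hyball, ?_⟩
        rw [Set.mem_setOf_eq, hinner]
        have h0' : 0 < c * ‖m‖^2 := by positivity
        nlinarith
      exact h2 this hyP
  rcases hU2 with hU | hU <;> rcases hV2 with hV | hV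
  · exact absurd ⟨hU, hV⟩ hnotPP
  · refine ⟨δ, hδ, Or.inl fun x hx => ⟨fun hxP => ?_, fun hle => ?_⟩⟩
    · by_contra hlt
      push_neg at hlt
      exact hV ⟨hx, hlt⟩ hxP
    · rcases eq_or_lt_of_le hle with heq | hlt
      · exact key2 x hx heq.symm
      · exact interior_subset (hU ⟨hx, hlt⟩)
  · refine ⟨δ, hδ, Or.inr fun x hx => ⟨fun hxP => ?_, fun hle => ?_⟩⟩
    · by_contra hlt
      push_neg at hlt
      exact hU ⟨hx, hlt⟩ hxP
    · rcases eq_or_lt_of_le hle with heq | hlt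
      · exact key2 x hx heq
      · exact interior_subset (hV ⟨hx, hlt⟩)
  · exact absurd ⟨hU, hV⟩ hnotCC


lemma poly_edge_halfplane (hP : IsSimplePolygonRegion P v) (i : Fin n) :
    ∃ m : E2, m ≠ 0 ∧ ⟪v (i + 1) - v i, m⟫ = 0 ∧
      ∀ z ∈ openSegment ℝ (v i) (v (i + 1)), ∃ δ > 0,
        ∀ x ∈ ball z δ, (x ∈ P ↔ ⟪v i, m⟫ ≤ ⟪x, m⟫) := by
  obtain ⟨m, hm, hwm⟩ := aux_exists_normal (v (i+1) - v i) (poly_dir_ne hP i)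
  have hmnorm : (0:ℝ) < ‖m‖ := norm_pos_iff.mpr hm
  set c : ℝ := ⟪v i, m⟫ with hcdef
  set U : Set E2 := {z | ∃ δ > 0, ∀ x ∈ ball z δ, (x ∈ P ↔ c ≤ ⟪x, m⟫)} with hUdef
  set V : Set E2 := {z | ∃ δ > 0, ∀ x ∈ ball z δ, (x ∈ P ↔ ⟪x, m⟫ ≤ c)} with hVdef
  have hUopen : IsOpen U := by
    rw [Metric.isOpen_iff]
    rintro z ⟨δ, hδ, hprop⟩
    refine ⟨δ/2, by linarith, ?_⟩
    intro z' hz'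
    refine ⟨δ - dist z' z, ?_, ?_⟩
    · have := mem_ball.mp hz'; linarith
    · intro x hx
      apply hprop
      exact ball_subset_ball' (by linarith) hx
  have hVopen : IsOpen V := by
    rw [Metric.isOpen_iff]
    rintro z ⟨δ, hδ, hprop⟩
    refine ⟨δ/2, by linarith, ?_⟩
    intro z' hz'
    refine ⟨δ - dist z' z, ?_, ?_⟩
    · have := mem_ball.mp hz'; linarith
    · intro x hx
      apply hprop
      exact ball_subset_ball' (by linarith) hx
  have hUV : Disjoint U V := by
    rw [Set.disjoint_left]
    rintro x ⟨δ₁, hδ₁, h₁⟩ ⟨δ₂, hδ₂, h₂⟩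
    set δ : ℝ := min δ₁ δ₂ with hδdef
    have hδ : 0 < δ := lt_min hδ₁ hδ₂
    have hinner : ∀ s : ℝ, ⟪x + s • m, m⟫ = ⟪x, m⟫ + s * ‖m‖^2 := by
      intro s
      rw [inner_add_left, real_inner_smul_left, real_inner_self_eq_norm_sq]
    have hball : ∀ s : ℝ, |s| = δ / (2 * ‖m‖) → (x + s • m ∈ ball x δ₁ ∧ x + s • m ∈ ball x δ₂) := by
      intro s hs
      have hd : dist (x + s • m) x = δ / 2 := by
        rw [dist_eq_norm]
        have : x + s • m - x = s • m := by abel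
        rw [this, norm_smul, Real.norm_eq_abs, hs]
        field_simp
      constructor
      · rw [mem_ball, hd]; have := min_le_left δ₁ δ₂; linarith
      · rw [mem_ball, hd]; have := min_le_right δ₁ δ₂; linarith
    have hspos : (0:ℝ) < δ / (2 * ‖m‖) := div_pos hδ (by linarith)
    rcases le_or_gt c ⟪x, m⟫ with h | h
    · obtain ⟨hb₁, hb₂⟩ := hball (δ / (2 * ‖m‖)) (abs_of_pos hspos)
      have hygt : c < ⟪x + (δ / (2 * ‖m‖)) • m, m⟫ := by
        rw [hinner]
        have : 0 < (δ / (2 * ‖m‖)) * ‖m‖^2 := by positivity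
        linarith
      have hyP : x + (δ / (2 * ‖m‖)) • m ∈ P := (h₁ _ hb₁).mpr hygt.le
      have := (h₂ _ hb₂).mp hyP
      linarith
    · obtain ⟨hb₁, hb₂⟩ := hball (-(δ / (2 * ‖m‖))) (by
        rw [abs_neg, abs_of_pos hspos])
      have hylt : ⟪x + (-(δ / (2 * ‖m‖))) • m, m⟫ < c := by
        rw [hinner]
        have : 0 < (δ / (2 * ‖m‖)) * ‖m‖^2 := by positivity
        nlinarith
      have hyP : x + (-(δ / (2 * ‖m‖))) • m ∈ P := (h₂ _ hb₂).mpr hylt.le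
      have := (h₁ _ hb₁).mp hyP
      linarith
  have hcov : openSegment ℝ (v i) (v (i + 1)) ⊆ U ∪ V := by
    intro z hz
    obtain ⟨δ, hδ, hor⟩ := poly_local_halfplane hP i hm hwm hz
    have hzc : ⟪z, m⟫ = c :=
      poly_inner_const_on_edge hwm (openSegment_subset_segment _ _ _ hz)
    rcases hor with h | h
    · exact Or.inl ⟨δ, hδ, h⟩
    · exact Or.inr ⟨δ, hδ, h⟩
  have hpre : IsPreconnected (openSegment ℝ (v i) (v (i + 1))) := by
    rw [openSegment_eq_image']
    exact isPreconnected_Ioo.image _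
      (continuous_const.add (continuous_id.smul continuous_const)).continuousOn
  rcases IsPreconnected.subset_or_subset hUopen hVopen hUV hcov hpre with hsub | hsub
  · exact ⟨m, hm, hwm, fun z hz => hsub hz⟩
  · refine ⟨-m, neg_ne_zero.mpr hm, by rw [inner_neg_right, hwm, neg_zero], ?_⟩
    intro z hz
    obtain ⟨δ, hδ, hprop⟩ := hsub hz
    refine ⟨δ, hδ, fun x hx => ?_⟩
    rw [inner_neg_right, inner_neg_right, neg_le_neg_iff]
    exact hprop x hx
  

/-- From a contact point, the consistent edge half-plane supports the convex set. -/
lemma poly_support (hP : IsSimplePolygonRegion P v) {i : Fin n} {N : E2}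
    (hNw : ⟪v (i + 1) - v i, N⟫ = 0)
    (hNloc : ∀ z ∈ openSegment ℝ (v i) (v (i + 1)), ∃ δ > 0,
      ∀ x ∈ ball z δ, (x ∈ P ↔ ⟪v i, N⟫ ≤ ⟪x, N⟫))
    {C : Set E2} (hCconv : Convex ℝ C) (hCP : C ⊆ P) (hvC : ∀ k, v k ∉ C)
    (hcontact : (C ∩ segment ℝ (v i) (v (i + 1))).Nonempty) :
    ∀ s ∈ C, ⟪v i, N⟫ ≤ ⟪s, N⟫ := by
  obtain ⟨z, hzC, hzseg⟩ := hcontact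
  have hzopen : z ∈ openSegment ℝ (v i) (v (i + 1)) :=
    poly_mem_openSegment_of_ne hzseg (fun h => hvC i (h ▸ hzC)) (fun h => hvC (i+1) (h ▸ hzC))
  obtain ⟨δ, hδ, hloc⟩ := hNloc z hzopen
  have hzN : ⟪z, N⟫ = ⟪v i, N⟫ := poly_inner_const_on_edge hNw hzseg
  intro s hs
  set t : ℝ := min 1 (δ / (2 * (‖s - z‖ + 1))) with htdef
  have hnormpos : (0:ℝ) < ‖s - z‖ + 1 := by positivity
  have ht0 : 0 < t := lt_min one_pos (div_pos hδ (by positivity))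
  have ht1 : t ≤ 1 := min_le_left _ _
  set xt : E2 := z + t • (s - z) with hxtdef
  have hxtC : xt ∈ C := by
    have h1 : (1 - t) • z + t • s ∈ C := hCconv hzC hs (by linarith) ht0.le (by ring)
    have h2 : (1 - t) • z + t • s = xt := by
      rw [hxtdef, smul_sub, sub_smul, one_smul]
      abel
    rwa [h2] at h1
  have hxtball : xt ∈ ball z δ := by
    rw [mem_ball, dist_eq_norm]
    have h1 : xt - z = t • (s - z) := by rw [hxtdef]; abel
    rw [h1, norm_smul, Real.norm_eq_abs, abs_of_pos ht0]
    have h2 : t ≤ δ / (2 * (‖s - z‖ + 1)) := min_le_right _ _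
    have h3 : t * ‖s - z‖ ≤ (δ / (2 * (‖s - z‖ + 1))) * ‖s - z‖ :=
      mul_le_mul_of_nonneg_right h2 (norm_nonneg _)
    have h4 : (δ / (2 * (‖s - z‖ + 1))) * ‖s - z‖ < δ / 2 := by
      rw [div_mul_eq_mul_div, div_lt_div_iff₀ (by positivity) two_pos]
      nlinarith [norm_nonneg (s - z)]
    linarith
  have hxtP : xt ∈ P := hCP hxtC
  have hineq : ⟪v i, N⟫ ≤ ⟪xt, N⟫ := (hloc xt hxtball).mp hxtP
  have hexp : ⟪xt, N⟫ = ⟪v i, N⟫ + t * ⟪s - z, N⟫ := by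
    rw [hxtdef, inner_add_left, real_inner_smul_left, hzN]
  rw [hexp] at hineq
  have h5 : 0 ≤ ⟪s - z, N⟫ := nonneg_of_mul_nonneg_right (by linarith) ht0
  rw [inner_sub_left] at h5
  linarith

lemma aux_affine_combo (u w : E2) (p q lam r : ℝ) (h : (1 - lam) * p + lam * q = r) :
    (1 - lam) • (u + p • w) + lam • (u + q • w) = u + r • w := by
  have : (1 - lam) • (u + p • w) + lam • (u + q • w)
      = ((1 - lam) + lam) • u + ((1 - lam) * p + lam * q) • w := by
    rw [add_smul, add_smul, mul_smul, mul_smul, smul_add, smul_add]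
    abel
  rw [this, h]
  simp

/-- The face of `C` in the line of a contact edge lies inside the open edge. -/
lemma poly_face (hP : IsSimplePolygonRegion P v) {i : Fin n} {N : E2} (hN0 : N ≠ 0)
    (hNw : ⟪v (i + 1) - v i, N⟫ = 0)
    {C : Set E2} (hCconv : Convex ℝ C) (hvC : ∀ k, v k ∉ C)
    (hcontact : (C ∩ segment ℝ (v i) (v (i + 1))).Nonempty) :
    ∀ x ∈ C, ⟪x, N⟫ = ⟪v i, N⟫ → x ∈ openSegment ℝ (v i) (v (i + 1)) := by
  obtain ⟨z, hzC, hzseg⟩ := hcontact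
  have hzopen : z ∈ openSegment ℝ (v i) (v (i + 1)) :=
    poly_mem_openSegment_of_ne hzseg (fun h => hvC i (h ▸ hzC)) (fun h => hvC (i+1) (h ▸ hzC))
  have hz' := hzopen
  rw [openSegment_eq_image'] at hz'
  obtain ⟨s, hs, hzeq⟩ := hz'
  set w : E2 := v (i + 1) - v i with hwdef
  have hw : w ≠ 0 := poly_dir_ne hP i
  intro x hxC hxN
  have hxz : ⟪x - v i, N⟫ = 0 := by rw [inner_sub_left, hxN]; ring
  obtain ⟨t, ht⟩ := aux_collinear w N (x - v i) hw hN0 hNw hxz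
  have hxeq : x = v i + t • w := by
    have : x = v i + (x - v i) := by abel
    rw [this, ht]
  have hzeq' : z = v i + s • w := hzeq.symm
  rcases lt_trichotomy t 0 with htlt | hteq | htgt
  · exfalso
    apply hvC i
    set lam : ℝ := (-t) / (s - t) with hlamdef
    have hst : 0 < s - t := by linarith [hs.1]
    have hlam0 : 0 ≤ lam := div_nonneg (by linarith) hst.le
    have hlam1 : lam ≤ 1 := by
      rw [div_le_one hst]
      linarith [hs.1]
    have hcombo : (1 - lam) * t + lam * s = 0 := by
      have hst' : s - t ≠ 0 := ne_of_gt hst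
      rw [hlamdef]
      field_simp
      ring
    have hkey : (1 - lam) • x + lam • z = v i := by
      rw [hxeq, hzeq']
      have := aux_affine_combo (v i) w t s lam 0 hcombo
      rw [this]
      simp
    rw [← hkey]
    exact hCconv hxC hzC (by linarith) hlam0 (by ring)
  · -- t = 0 means x = v i... but x ∈ C and v i ∉ C; need contradiction? no: t = 0 gives x = v i
    exfalso
    apply hvC i
    rw [hteq] at hxeq
    simp at hxeq
    rwa [← hxeq]
  · rcases lt_trichotomy t 1 with ht1 | ht1 | ht1
    · rw [openSegment_eq_image']
      exact ⟨t, ⟨htgt, ht1⟩, hxeq.symm⟩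
    · exfalso
      apply hvC (i + 1)
      rw [ht1] at hxeq
      have : v (i+1) = v i + (1:ℝ) • w := by rw [one_smul, hwdef]; abel
      rw [← this] at hxeq
      rwa [← hxeq]
    · exfalso
      apply hvC (i + 1)
      set lam : ℝ := (t - 1) / (t - s) with hlamdef
      have hst : 0 < t - s := by linarith [hs.2]
      have hlam0 : 0 ≤ lam := div_nonneg (by linarith) hst.le
      have hlam1 : lam ≤ 1 := by
        rw [div_le_one hst]
        linarith [hs.2]
      have hcombo : (1 - lam) * t + lam * s = 1 := by
        have hst' : t - s ≠ 0 := ne_of_gt hst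
        rw [hlamdef]
        field_simp
        ring
      have hkey : (1 - lam) • x + lam • z = v i + (1:ℝ) • w := by
        rw [hxeq, hzeq']
        exact aux_affine_combo (v i) w t s lam 1 hcombo
      have hv1 : v (i+1) = v i + (1:ℝ) • w := by rw [one_smul, hwdef]; abel
      rw [← hv1] at hkey
      rw [← hkey]
      exact hCconv hxC hzC (by linarith) hlam0 (by ring)

lemma aux_eps_subset {C U : Set E2} (hCcpt : IsCompact C) (hCne : C.Nonempty)
    (hU : IsOpen U) (hCU : C ⊆ U) : ∃ ε > 0, ∀ x, infDist x C ≤ ε → x ∈ U := by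
  rcases eq_empty_or_nonempty Uᶜ with hUc | hUc
  · refine ⟨1, one_pos, fun x _ => ?_⟩
    by_contra h
    exact (eq_empty_iff_forall_notMem.mp hUc) x h
  obtain ⟨x₀, hx₀C, hmin⟩ := hCcpt.exists_isMinOn hCne (continuous_infDist_pt Uᶜ).continuousOn
  set ε : ℝ := infDist x₀ Uᶜ / 2 with hεdef
  have hx₀pos : 0 < infDist x₀ Uᶜ :=
    (IsClosed.notMem_iff_infDist_pos hU.isClosed_compl hUc).mp (fun h => h (hCU hx₀C))
  refine ⟨ε, by linarith, fun x hx => ?_⟩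
  by_contra hxU
  obtain ⟨y, hyC, hyd⟩ := (infDist_lt_iff hCne).mp (lt_of_le_of_lt hx (by linarith : ε < 2 * ε))
  have h1 : infDist y Uᶜ ≤ dist y x := infDist_le_dist_of_mem hxU
  have h2 : infDist x₀ Uᶜ ≤ infDist y Uᶜ := hmin hyC
  rw [dist_comm] at h1
  have : infDist x₀ Uᶜ = 2 * ε := by rw [hεdef]; ring
  linarith


/-- Points close to `C` satisfying all contact-edge constraints belong to `P`. -/
lemma poly_star (hP : IsSimplePolygonRegion P v) (N : Fin n → E2)
    (hNloc : ∀ i : Fin n, ∀ z ∈ openSegment ℝ (v i) (v (i + 1)), ∃ δ > 0,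
      ∀ x ∈ ball z δ, (x ∈ P ↔ ⟪v i, N i⟫ ≤ ⟪x, N i⟫))
    {C : Set E2} (hCcpt : IsCompact C) (hCne : C.Nonempty) (hCP : C ⊆ P)
    (hvC : ∀ k, v k ∉ C) :
    ∃ ε > 0, ∀ x, infDist x C ≤ ε →
      (∀ i : Fin n, (C ∩ segment ℝ (v i) (v (i + 1))).Nonempty → ⟪v i, N i⟫ ≤ ⟪x, N i⟫) →
      x ∈ P := by
  by_contra hcon
  push_neg at hcon
  have hseq : ∀ k : ℕ, ∃ x : E2, infDist x C ≤ 1/((k:ℝ)+1) ∧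
      (∀ i : Fin n, (C ∩ segment ℝ (v i) (v (i + 1))).Nonempty → ⟪v i, N i⟫ ≤ ⟪x, N i⟫) ∧
      x ∉ P := by
    intro k
    obtain ⟨x, h1, h2, h3⟩ := hcon (1/((k:ℝ)+1)) (by positivity)
    exact ⟨x, h1, h2, h3⟩
  choose xs hxd hxK hxP using hseq
  -- container
  obtain ⟨s₀, hs₀⟩ := id hCne
  obtain ⟨R, hR⟩ := hCcpt.isBounded.subset_closedBall s₀
  set M : Set E2 := {x | infDist x C ≤ 1} with hMdef
  have hMclosed : IsClosed M := isClosed_le (continuous_infDist_pt C) continuous_const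
  have hMsub : M ⊆ closedBall s₀ (R + 2) := by
    intro x hx
    obtain ⟨y, hyC, hyd⟩ := (infDist_lt_iff hCne).mp (lt_of_le_of_lt hx one_lt_two)
    have h2 : dist y s₀ ≤ R := hR hyC
    rw [mem_closedBall]
    calc dist x s₀ ≤ dist x y + dist y s₀ := dist_triangle _ _ _
      _ ≤ R + 2 := by linarith
  have hMcpt : IsCompact M :=
    (isCompact_closedBall s₀ (R + 2)).of_isClosed_subset hMclosed hMsub
  have hxsM : ∀ k, xs k ∈ M := by
    intro k
    have : 1/((k:ℝ)+1) ≤ 1 := by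
      rw [div_le_one (by positivity)]
      push_cast
      linarith [Nat.cast_nonneg (α := ℝ) k]
    exact le_trans (hxd k) this
  obtain ⟨w, hwM, φ, hφ, hφtend⟩ := hMcpt.tendsto_subseq hxsM
  -- w ∈ C
  have hwC : w ∈ C := by
    have htend : Filter.Tendsto (fun k => infDist (xs (φ k)) C) Filter.atTop
        (nhds (infDist w C)) := ((continuous_infDist_pt C).tendsto w).comp hφtend
    have hbound : ∀ k : ℕ, infDist (xs (φ k)) C ≤ 1/((k:ℝ)+1) := by
      intro k
      refine le_trans (hxd (φ k)) ?_
      apply one_div_le_one_div_of_le (by positivity)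
      have h1 : (k:ℝ) ≤ (φ k : ℝ) := by exact_mod_cast hφ.le_apply
      linarith
    have hzero : Filter.Tendsto (fun k : ℕ => 1/((k:ℝ)+1)) Filter.atTop (nhds 0) :=
      tendsto_one_div_add_atTop_nhds_zero_nat
    have hle : infDist w C ≤ 0 := le_of_tendsto_of_tendsto' htend hzero hbound
    have : infDist w C = 0 := le_antisymm hle infDist_nonneg
    exact (hCcpt.isClosed.mem_iff_infDist_zero hCne).mpr this
  -- w on the frontier
  have hwfr : w ∈ frontier P := by
    have hw1 : w ∈ P := hCP hwC
    have hw2 : w ∈ closure Pᶜ :=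
      mem_closure_of_tendsto hφtend (Filter.Eventually.of_forall (fun k => hxP (φ k)))
    rw [closure_compl] at hw2
    rw [(poly_closed hP).frontier_eq]
    exact ⟨hw1, hw2⟩
  rw [hP.2.2.2.2.2.1, mem_iUnion] at hwfr
  obtain ⟨j, hwseg⟩ := hwfr
  have hwopen : w ∈ openSegment ℝ (v j) (v (j + 1)) :=
    poly_mem_openSegment_of_ne hwseg (fun h => hvC j (h ▸ hwC)) (fun h => hvC (j+1) (h ▸ hwC))
  obtain ⟨δ, hδ, hloc⟩ := hNloc j w hwopen
  have hev : ∀ᶠ k in Filter.atTop, dist (xs (φ k)) w < δ :=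
    (Metric.tendsto_nhds.mp hφtend) δ hδ
  obtain ⟨k, hk⟩ := hev.exists
  have hxball : xs (φ k) ∈ ball w δ := mem_ball.mpr hk
  have hcontact : (C ∩ segment ℝ (v j) (v (j + 1))).Nonempty := ⟨w, hwC, hwseg⟩
  have := (hloc _ hxball).mpr (hxK (φ k) j hcontact)
  exact hxP (φ k) this


lemma poly_endgame (hP : IsSimplePolygonRegion P v) (N : Fin n → E2)
    (hN0 : ∀ i, N i ≠ 0) (hNw : ∀ i, ⟪v (i + 1) - v i, N i⟫ = 0)
    (hNloc : ∀ i : Fin n, ∀ z ∈ openSegment ℝ (v i) (v (i + 1)), ∃ δ > 0,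
      ∀ x ∈ ball z δ, (x ∈ P ↔ ⟪v i, N i⟫ ≤ ⟪x, N i⟫))
    {C : Set E2} (hCcpt : IsCompact C) (hCconv : Convex ℝ C) (hCP : C ⊆ P)
    (hvC : ∀ k, v k ∉ C)
    (hKC : ∀ x : E2, (∀ i : Fin n, (C ∩ segment ℝ (v i) (v (i + 1))).Nonempty →
      ⟪v i, N i⟫ ≤ ⟪x, N i⟫) → x ∈ C)
    (hT : ∃ j, (C ∩ segment ℝ (v j) (v (j + 1))).Nonempty) : False := by
  obtain ⟨j, hcontact⟩ := hT
  set w : E2 := v (j + 1) - v j with hwdef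
  have hNwj : ⟪w, N j⟫ = 0 := hNw j
  have hw : w ≠ 0 := poly_dir_ne hP j
  have hwn : (0:ℝ) < ‖w‖ := norm_pos_iff.mpr hw
  set F : Set E2 := C ∩ {x | ⟪x, N j⟫ = ⟪v j, N j⟫} with hFdef
  have hFcpt : IsCompact F := hCcpt.inter_right (isClosed_eq
    (Continuous.inner continuous_id continuous_const) continuous_const)
  have hFne : F.Nonempty := by
    obtain ⟨z, hzC, hzseg⟩ := hcontact
    exact ⟨z, hzC, poly_inner_const_on_edge (hNw j) hzseg⟩
  obtain ⟨b, hbF, hbmax⟩ := hFcpt.exists_isMaxOn (f := fun x : E2 => ⟪x, w⟫) hFne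
    (Continuous.inner continuous_id continuous_const).continuousOn
  have hbC : b ∈ C := hbF.1
  have hbc : ⟪b, N j⟫ = ⟪v j, N j⟫ := hbF.2
  have hbopen : b ∈ openSegment ℝ (v j) (v (j + 1)) :=
    poly_face hP (hN0 j) (hNw j) hCconv hvC hcontact b hbC hbc
  have hb' := hbopen
  rw [openSegment_eq_image'] at hb'
  obtain ⟨θb, hθb, hbeq⟩ := hb'
  set tk : ℕ → ℝ := fun k => (1 - θb)/((k:ℝ)+2) with htkdef
  have htpos : ∀ k : ℕ, 0 < tk k := fun k => div_pos (by linarith [hθb.2]) (by positivity)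
  have htlt : ∀ k : ℕ, tk k < 1 - θb := by
    intro k
    rw [htkdef]
    dsimp only
    rw [div_lt_iff₀ (by positivity)]
    nlinarith [hθb.2, Nat.cast_nonneg (α := ℝ) k]
  set xt : ℕ → E2 := fun k => b + (tk k) • w with hxtdef
  have hxtline : ∀ k, ⟪xt k, N j⟫ = ⟪v j, N j⟫ := by
    intro k
    show ⟪b + (tk k) • w, N j⟫ = ⟪v j, N j⟫
    rw [inner_add_left, real_inner_smul_left, hNwj, hbc]
    ring
  have hxtseg : ∀ k, xt k ∈ segment ℝ (v j) (v (j + 1)) := by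
    intro k
    rw [segment_eq_image']
    refine ⟨θb + tk k, ⟨by linarith [hθb.1, htpos k], by linarith [htlt k]⟩, ?_⟩
    show v j + (θb + tk k) • w = xt k
    rw [add_smul]
    have : v j + θb • w = b := hbeq
    rw [← add_assoc, this]
  have hxtnotC : ∀ k, xt k ∉ C := by
    intro k hmem
    have hxtF : xt k ∈ F := ⟨hmem, hxtline k⟩
    have hle : ⟪xt k, w⟫ ≤ ⟪b, w⟫ := hbmax hxtF
    have hexp : ⟪xt k, w⟫ = ⟪b, w⟫ + (tk k) * ‖w‖^2 := by
      show ⟪b + (tk k) • w, w⟫ = _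
      rw [inner_add_left, real_inner_smul_left, real_inner_self_eq_norm_sq]
    nlinarith [htpos k, sq_nonneg ‖w‖, pow_pos hwn 2]
  have hviol : ∀ k : ℕ, ∃ i : Fin n, (C ∩ segment ℝ (v i) (v (i + 1))).Nonempty ∧
      ⟪xt k, N i⟫ < ⟪v i, N i⟫ := by
    intro k
    by_contra h
    push_neg at h
    exact hxtnotC k (hKC _ h)
  choose g hg1 hg2 using hviol
  obtain ⟨i0, hi0⟩ := Finite.exists_infinite_fiber g
  have hi0inf : (g ⁻¹' {i0}).Infinite := Set.infinite_coe_iff.mp hi0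
  obtain ⟨k₀, hk₀⟩ := hi0inf.nonempty
  have hgk₀ : g k₀ = i0 := hk₀
  have hcontact0 : (C ∩ segment ℝ (v i0) (v (i0 + 1))).Nonempty := hgk₀ ▸ hg1 k₀
  have hbge : ⟪v i0, N i0⟫ ≤ ⟪b, N i0⟫ :=
    poly_support hP (hNw i0) (hNloc i0) hCconv hCP hvC hcontact0 b hbC
  have hbeq0 : ⟪b, N i0⟫ = ⟪v i0, N i0⟫ := by
    by_contra hne
    have hgt : 0 < ⟪b, N i0⟫ - ⟪v i0, N i0⟫ := by
      rcases lt_or_eq_of_le hbge with h | h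
      · linarith
      · exact absurd h.symm hne
    set α : ℝ := ⟪b, N i0⟫ - ⟪v i0, N i0⟫ with hαdef
    set B : ℝ := ‖w‖ * ‖N i0‖ with hBdef
    have hBnn : 0 ≤ B := by positivity
    obtain ⟨K, hK⟩ := exists_nat_gt ((1 - θb) * B / α)
    have hbig : ∃ k, k ∈ g ⁻¹' {i0} ∧ K < k := by
      by_contra hno
      push_neg at hno
      exact hi0inf (Set.Finite.subset (Set.finite_Iic K) (fun k hk => hno k hk))
    obtain ⟨k, hkfib, hkK⟩ := hbig
    have hik : g k = i0 := hkfib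
    have hlt := hg2 k
    rw [hik] at hlt
    have hexp : ⟪xt k, N i0⟫ = ⟪b, N i0⟫ + (tk k) * ⟪w, N i0⟫ := by
      show ⟪b + (tk k) • w, N i0⟫ = _
      rw [inner_add_left, real_inner_smul_left]
    have hCS : |⟪w, N i0⟫| ≤ B := abs_real_inner_le_norm w (N i0)
    have hkpos : (0:ℝ) < (k:ℝ) + 2 := by positivity
    have hKk : ((K:ℝ)) < (k:ℝ) := by exact_mod_cast hkK
    have h2 : (1 - θb) * B < α * ((k:ℝ) + 2) := by
      rw [div_lt_iff₀ hgt] at hK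
      nlinarith
    have h3 : (tk k) * B < α := by
      rw [htkdef]
      dsimp only
      rw [div_mul_eq_mul_div, div_lt_iff₀ hkpos]
      nlinarith
    have h4 : (tk k) * |⟪w, N i0⟫| ≤ (tk k) * B :=
      mul_le_mul_of_nonneg_left hCS (htpos k).le
    have h5 : -(tk k * |⟪w, N i0⟫|) ≤ tk k * ⟪w, N i0⟫ := by
      have h6 := mul_le_mul_of_nonneg_left (neg_abs_le ⟪w, N i0⟫) (htpos k).le
      rwa [mul_neg] at h6
    rw [hexp] at hlt
    have : α ≤ tk k * |⟪w, N i0⟫| := by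
      rw [hαdef]
      linarith
    linarith
  have hbopen0 : b ∈ openSegment ℝ (v i0) (v (i0 + 1)) :=
    poly_face hP (hN0 i0) (hNw i0) hCconv hvC hcontact0 b hbC hbeq0
  have hij : i0 ≠ j := by
    intro h
    have hlt := hg2 k₀
    rw [hgk₀, h] at hlt
    exact absurd (hxtline k₀) (ne_of_lt hlt)
  obtain ⟨k', hk'⟩ := poly_inter_edges hP (Ne.symm hij)
    (openSegment_subset_segment _ _ _ hbopen) (openSegment_subset_segment _ _ _ hbopen0)
  exact poly_openSegment_not_vertex hP hbopen k' hk'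


end Poly

theorem convex_subset_visible_from_vertex {n : ℕ} [NeZero n]
    (P : Set (EuclideanSpace ℝ (Fin 2))) (v : Fin n → EuclideanSpace ℝ (Fin 2))
    (hP : IsSimplePolygonRegion P v)
    (S : Set (EuclideanSpace ℝ (Fin 2)))
    (hSP : S ⊆ P) (hS_ne : S.Nonempty) (hS_cpt : IsCompact S) (hS_conv : Convex ℝ S) :
    ∃ i : Fin n, ∀ s ∈ S, segment ℝ (v i) s ⊆ P := by
  classical
  have hPclosed : IsClosed P := poly_closed hP
  set 𝒞 : Set (Set E2) := {C | Convex ℝ C ∧ S ⊆ C ∧ C ⊆ P} with h𝒞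
  have hS𝒞 : S ∈ 𝒞 := ⟨hS_conv, subset_rfl, hSP⟩
  have hchain : ∀ c ⊆ 𝒞, IsChain (· ⊆ ·) c → c.Nonempty → ∃ ub ∈ 𝒞, ∀ s ∈ c, s ⊆ ub := by
    intro c hc𝒞 hch hcne
    refine ⟨⋃₀ c, ⟨?_, ?_, ?_⟩, fun s hs => subset_sUnion_of_mem hs⟩
    · intro x hx y hy a b ha hb hab
      obtain ⟨Cx, hCx, hxCx⟩ := hx
      obtain ⟨Cy, hCy, hyCy⟩ := hy
      rcases eq_or_ne Cx Cy with rfl | hne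
      · exact mem_sUnion.mpr ⟨Cx, hCx, (hc𝒞 hCx).1 hxCx hyCy ha hb hab⟩
      · rcases hch hCx hCy hne with h | h
        · exact mem_sUnion.mpr ⟨Cy, hCy, (hc𝒞 hCy).1 (h hxCx) hyCy ha hb hab⟩
        · exact mem_sUnion.mpr ⟨Cx, hCx, (hc𝒞 hCx).1 hxCx (h hyCy) ha hb hab⟩
    · obtain ⟨c₀, hc₀⟩ := hcne
      exact (hc𝒞 hc₀).2.1.trans (subset_sUnion_of_mem hc₀)
    · exact sUnion_subset (fun s hs => (hc𝒞 hs).2.2)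
  obtain ⟨C, hSC, hmax⟩ := zorn_subset_nonempty 𝒞 hchain S hS𝒞
  obtain ⟨hCconv, hSC', hCP⟩ := hmax.prop
  have hCcl : IsClosed C := by
    have hcl𝒞 : closure C ∈ 𝒞 :=
      ⟨hCconv.closure, hSC'.trans subset_closure, closure_minimal hCP hPclosed⟩
    exact isClosed_of_closure_subset (hmax.2 hcl𝒞 subset_closure)
  have hCcpt : IsCompact C := hP.2.2.1.of_isClosed_subset hCcl hCP
  have hCne : C.Nonempty := hS_ne.mono hSC
  by_cases hvtx : ∃ i, v i ∈ C
  · obtain ⟨i, hi⟩ := hvtx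
    refine ⟨i, fun s hs => ?_⟩
    exact (hCconv.segment_subset hi (hSC hs)).trans hCP
  push_neg at hvtx
  exfalso
  choose N hN0 hNw hNloc using fun i => poly_edge_halfplane hP i
  have hmaxq : ∀ q : E2, convexHull ℝ (insert q C) ⊆ P → q ∈ C := by
    intro q hq
    have hhull𝒞 : convexHull ℝ (insert q C) ∈ 𝒞 :=
      ⟨convex_convexHull _ _, hSC.trans ((subset_insert q C).trans (subset_convexHull _ _)), hq⟩
    exact hmax.2 hhull𝒞 ((subset_insert q C).trans (subset_convexHull _ _))
      (subset_convexHull _ _ (mem_insert q C))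
  have hSeps : ∀ ε : ℝ, 0 < ε → Convex ℝ {x : E2 | infDist x C ≤ ε} := by
    intro ε hε x hx y hy a b ha hb hab
    have h1 := aux_infDist_combo hCconv hCne (x := x) (y := y) ha hb hab
    have hx' : infDist x C ≤ ε := hx
    have hy' : infDist y C ≤ ε := hy
    show infDist (a • x + b • y) C ≤ ε
    nlinarith
  set Kset : Set E2 := {x : E2 | ∀ i : Fin n,
    (C ∩ segment ℝ (v i) (v (i + 1))).Nonempty → ⟪v i, N i⟫ ≤ ⟪x, N i⟫} with hKsetdef
  have hKsetconv : Convex ℝ Kset := by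
    intro x hx y hy a b ha hb hab
    intro i hi
    have h1 := hx i hi
    have h2 := hy i hi
    have h3 : ⟪a • x + b • y, N i⟫ = a * ⟪x, N i⟫ + b * ⟪y, N i⟫ := by
      rw [inner_add_left, real_inner_smul_left, real_inner_smul_left]
    rw [h3]
    have h4 : a * ⟪v i, N i⟫ + b * ⟪v i, N i⟫ = ⟪v i, N i⟫ := by
      rw [← add_mul, hab, one_mul]
    have h5 := mul_le_mul_of_nonneg_left h1 ha
    have h6 := mul_le_mul_of_nonneg_left h2 hb
    linarith
  have hCK : C ⊆ Kset := fun s hs i hi =>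
    poly_support hP (hNw i) (hNloc i) hCconv hCP hvtx hi s hs
  by_cases hT : ∃ j, (C ∩ segment ℝ (v j) (v (j + 1))).Nonempty
  · by_cases hK : ∀ x : E2, (∀ i : Fin n, (C ∩ segment ℝ (v i) (v (i + 1))).Nonempty →
        ⟪v i, N i⟫ ≤ ⟪x, N i⟫) → x ∈ C
    · exact poly_endgame hP N hN0 hNw hNloc hCcpt hCconv hCP hvtx hK hT
    · push_neg at hK
      obtain ⟨p, hpK, hpC⟩ := hK
      obtain ⟨ε, hε, hstar⟩ := poly_star hP N hNloc hCcpt hCne hCP hvtx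
      obtain ⟨s₀, hs₀⟩ := id hCne
      obtain ⟨q, hqseg, hqC, hqd⟩ := aux_step_out hCcl hs₀ hpC hε
      apply hqC
      apply hmaxq
      have hqK : q ∈ Kset := (hKsetconv.segment_subset (hCK hs₀) hpK) hqseg
      have hhullsub : convexHull ℝ (insert q C) ⊆ {x | infDist x C ≤ ε} ∩ Kset := by
        apply convexHull_min
        · intro y hy
          rcases mem_insert_iff.mp hy with rfl | hyC
          · exact ⟨hqd, hqK⟩
          · exact ⟨by rw [mem_setOf_eq, infDist_zero_of_mem hyC]; exact hε.le, hCK hyC⟩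
        · exact (hSeps ε hε).inter hKsetconv
      intro y hy
      obtain ⟨hy1, hy2⟩ := hhullsub hy
      exact hstar y hy1 hy2
  · push_neg at hT
    have hCint : C ⊆ interior P := by
      intro x hx
      by_contra hxint
      have hxfr : x ∈ frontier P := by
        rw [hPclosed.frontier_eq]
        exact ⟨hCP hx, hxint⟩
      rw [hP.2.2.2.2.2.1, mem_iUnion] at hxfr
      obtain ⟨j, hj⟩ := hxfr
      have hxmem : x ∈ C ∩ segment ℝ (v j) (v (j + 1)) := ⟨hx, hj⟩
      rw [hT j] at hxmem
      exact hxmem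
    obtain ⟨ε, hε, hsub⟩ := aux_eps_subset hCcpt hCne isOpen_interior hCint
    obtain ⟨s₀, hs₀⟩ := id hCne
    obtain ⟨R, hR⟩ := hCcpt.isBounded.subset_closedBall s₀
    set u₀ : E2 := EuclideanSpace.single (0 : Fin 2) (1:ℝ) with hu₀
    have hu₀n : ‖u₀‖ = 1 := by rw [hu₀, EuclideanSpace.norm_single]; norm_num
    set p : E2 := s₀ + (|R| + 1) • u₀ with hpdef
    have hpC : p ∉ C := by
      intro hmem
      have hball := hR hmem
      rw [hpdef, mem_closedBall] at hball
      have hd : dist (s₀ + (|R| + 1) • u₀) s₀ = |R| + 1 := by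
        rw [dist_eq_norm]
        have h1 : s₀ + (|R| + 1) • u₀ - s₀ = (|R| + 1) • u₀ := by abel
        rw [h1, norm_smul, Real.norm_eq_abs, hu₀n, mul_one,
          abs_of_pos (by positivity : (0:ℝ) < |R| + 1)]
      rw [hd] at hball
      have := le_abs_self R
      linarith
    obtain ⟨q, hqseg, hqC, hqd⟩ := aux_step_out hCcl hs₀ hpC hε
    apply hqC
    apply hmaxq
    have hhullsub : convexHull ℝ (insert q C) ⊆ {x | infDist x C ≤ ε} := by
      apply convexHull_min
      · intro y hy
        rcases mem_insert_iff.mp hy with rfl | hyC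
        · exact hqd
        · rw [mem_setOf_eq, infDist_zero_of_mem hyC]; exact hε.le
      · exact hSeps ε hε
    intro y hy
    exact interior_subset (hsub y (hhullsub hy))
end
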